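/- Let E ∈ ℝ^{(N−p)×p} and M = I_p + E^T E. Then M is symmetric positive definite, M^{-1/2} exists, and ||I_p − M^{-1/2}|| = 1 − 1/√(1 + ||E||²) ≤ ||E||²/(1 + ||E||²), where || · || is the spectral norm. -/

import Mathlib

open Matrix

/-- The spectral (operator 2-)norm of a real matrix. -/
noncomputable def snorm {m n : Type*} [Fintype m] [Fintype n] [DecidableEq n]
    (A : Matrix m n ℝ) : ℝ :=
  ‖LinearMap.toContinuousLinearMap (Matrix.toEuclideanLin A)‖

open scoped Matrix.Norms.L2Operator

lemma snorm_eq_l2norm {m n : Type*} [Fintype m] [Fintype n] [DecidableEq n]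
    (A : Matrix m n ℝ) : snorm A = ‖A‖ := rfl

lemma snorm_of_isEmpty {m n : Type*} [Fintype m] [Fintype n] [DecidableEq n] [IsEmpty n]
    (A : Matrix m n ℝ) : snorm A = 0 := by
  haveI : Subsingleton (EuclideanSpace ℝ n) := ⟨fun a b => by ext i; exact isEmptyElim i⟩
  unfold snorm
  have h : (LinearMap.toContinuousLinearMap (Matrix.toEuclideanLin A)) = 0 := by
    ext x
    rw [Subsingleton.elim x 0]
    simp
  rw [h, norm_zero]

lemma snorm_diagonal {n : Type*} [Fintype n] [DecidableEq n] [Nonempty n] (d : n → ℝ) :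
    snorm (diagonal d) = Finset.univ.sup' Finset.univ_nonempty (fun i => |d i|) := by
  set c := Finset.univ.sup' Finset.univ_nonempty (fun i => |d i|) with hcdef
  obtain ⟨j, -, hj⟩ := Finset.exists_mem_eq_sup' Finset.univ_nonempty (fun i => |d i|)
  have hle : ∀ i, |d i| ≤ c := fun i => hcdef ▸ Finset.le_sup' (fun i => |d i|) (Finset.mem_univ i)
  have hc0 : 0 ≤ c := le_trans (abs_nonneg _) (hle j)
  set T := LinearMap.toContinuousLinearMap (Matrix.toEuclideanLin (diagonal d)) with hT
  have happ : ∀ (y : EuclideanSpace ℝ n) (i : n), (T y) i = d i * y i := by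
    intro y i
    show (Matrix.toEuclideanLin (diagonal d) y) i = d i * y i
    rw [Matrix.toEuclideanLin_apply]
    exact mulVec_diagonal d _ i
  refine le_antisymm (ContinuousLinearMap.opNorm_le_bound _ hc0 fun y => ?_) ?_
  · rw [EuclideanSpace.norm_eq, EuclideanSpace.norm_eq]
    have h1 : ∑ i, ‖(T y) i‖ ^ 2 ≤ c ^ 2 * ∑ i, ‖y i‖ ^ 2 := by
      rw [Finset.mul_sum]
      refine Finset.sum_le_sum fun i _ => ?_
      rw [happ]
      have h2 : ‖d i * y i‖ = |d i| * ‖y i‖ := by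
        rw [Real.norm_eq_abs, Real.norm_eq_abs, abs_mul]
      rw [h2, ← mul_pow c]
      have : |d i| * ‖y i‖ ≤ c * ‖y i‖ :=
        mul_le_mul_of_nonneg_right (hle i) (norm_nonneg _)
      exact pow_le_pow_left₀ (by positivity) this 2
    calc Real.sqrt (∑ i, ‖(T y) i‖ ^ 2) ≤ Real.sqrt (c ^ 2 * ∑ i, ‖y i‖ ^ 2) :=
          Real.sqrt_le_sqrt h1
      _ = c * Real.sqrt (∑ i, ‖y i‖ ^ 2) := by
          rw [Real.sqrt_mul (by positivity), Real.sqrt_sq hc0]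
  · have hy : T (EuclideanSpace.single j 1) = EuclideanSpace.single j (d j) := by
      ext i
      rw [happ]
      rcases eq_or_ne i j with rfl | hij
      · simp
      · simp [EuclideanSpace.single_apply, hij]
    have h1 : ‖T (EuclideanSpace.single j (1:ℝ))‖ ≤ ‖T‖ * ‖EuclideanSpace.single j (1:ℝ)‖ :=
      T.le_opNorm _
    rw [hy, EuclideanSpace.norm_single, EuclideanSpace.norm_single] at h1
    show c ≤ ‖T‖
    rw [hcdef, hj]
    simpa [Real.norm_eq_abs] using h1

lemma snorm_conj_unitary {n : Type*} [Fintype n] [DecidableEq n]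
    (U : Matrix.unitaryGroup n ℝ) (A : Matrix n n ℝ) :
    snorm ((U : Matrix n n ℝ) * A * star (U : Matrix n n ℝ)) = snorm A := by
  rw [snorm_eq_l2norm, snorm_eq_l2norm, mul_assoc,
    CStarRing.norm_mem_unitary_mul (A * star (U : Matrix n n ℝ)) U.2,
    CStarRing.norm_mul_mem_unitary A (Unitary.star_mem U.2)]

lemma posDef_conj_unitary {n : Type*} [Fintype n] [DecidableEq n]
    (U : Matrix.unitaryGroup n ℝ) {D : Matrix n n ℝ} (hD : D.PosDef) :
    ((U : Matrix n n ℝ) * D * star (U : Matrix n n ℝ)).PosDef := by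
  refine PosDef.of_dotProduct_mulVec_pos ?_ ?_
  · show _ᴴ = _
    rw [← star_eq_conjTranspose, StarMul.star_mul, StarMul.star_mul, star_star,
      show star D = D from by rw [star_eq_conjTranspose]; exact hD.1, mul_assoc]
  · intro x hx
    have hUU : (U : Matrix n n ℝ) * star (U : Matrix n n ℝ) = 1 :=
      Unitary.coe_mul_star_self U
    have hy : (star (U : Matrix n n ℝ)) *ᵥ x ≠ 0 := by
      intro h
      apply hx
      have h2 := congrArg (fun v => (U : Matrix n n ℝ) *ᵥ v) h
      simpa [mulVec_mulVec, hUU] using h2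
    have key : star x ⬝ᵥ ((U : Matrix n n ℝ) * D * star (U : Matrix n n ℝ)) *ᵥ x
        = star ((star (U : Matrix n n ℝ)) *ᵥ x) ⬝ᵥ D *ᵥ ((star (U : Matrix n n ℝ)) *ᵥ x) := by
      rw [star_mulVec,
        show ((star (U : Matrix n n ℝ))ᴴ) = (U : Matrix n n ℝ) by
          rw [← star_eq_conjTranspose, star_star],
        ← mulVec_mulVec, ← mulVec_mulVec, dotProduct_mulVec]
    rw [key]
    exact hD.dotProduct_mulVec_pos hy

/-- for `E ∈ ℝ^{q×p}` and `M = I + Eᵀ E`, `M` is symmetric positive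
definite, its inverse symmetric positive definite square root `M^{-1/2}` exists,
and `‖I − M^{-1/2}‖ = 1 − 1/√(1 + ‖E‖²) ≤ ‖E‖²/(1 + ‖E‖²)`. -/
theorem inv_sqrt_perturbation
    (p q : ℕ) (E : Matrix (Fin q) (Fin p) ℝ)
    (M : Matrix (Fin p) (Fin p) ℝ) (hM : M = 1 + Eᵀ * E) :
    M.PosDef ∧
    (∃ R : Matrix (Fin p) (Fin p) ℝ, R.PosDef ∧ R * R = M) ∧
    (∀ R : Matrix (Fin p) (Fin p) ℝ, R.PosDef → R * R = M →
      snorm (1 - R⁻¹) = 1 - 1 / Real.sqrt (1 + snorm E ^ 2) ∧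
      snorm (1 - R⁻¹) ≤ snorm E ^ 2 / (1 + snorm E ^ 2)) := by
  have hconj : Eᴴ = Eᵀ := conjTranspose_eq_transpose_of_trivial E
  have hBps : (Eᵀ * E).PosSemidef := hconj ▸ posSemidef_conjTranspose_mul_self E
  have hBH : (Eᵀ * E).IsHermitian := hBps.1
  have hMpd : M.PosDef := by
    rw [hM]; exact Matrix.PosDef.one.add_posSemidef hBps
  set μ : Fin p → ℝ := hBH.eigenvalues with hμdef
  set U := hBH.eigenvectorUnitary with hUdef
  have hμ0 : ∀ i, 0 ≤ μ i := hBps.eigenvalues_nonneg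
  have hspec : Eᵀ * E = (U : Matrix (Fin p) (Fin p) ℝ) * diagonal μ
      * star (U : Matrix (Fin p) (Fin p) ℝ) := by
    have h := hBH.spectral_theorem
    rwa [RCLike.ofReal_real_eq_id, Function.id_comp] at h
  have hUsU : (U : Matrix (Fin p) (Fin p) ℝ) * star (U : Matrix (Fin p) (Fin p) ℝ) = 1 :=
    Unitary.coe_mul_star_self U
  have hsUU : star (U : Matrix (Fin p) (Fin p) ℝ) * (U : Matrix (Fin p) (Fin p) ℝ) = 1 :=
    Unitary.coe_star_mul_self U
  have hconjmul : ∀ X Y : Matrix (Fin p) (Fin p) ℝ,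
      ((U : Matrix (Fin p) (Fin p) ℝ) * X * star (U : Matrix (Fin p) (Fin p) ℝ))
        * ((U : Matrix (Fin p) (Fin p) ℝ) * Y * star (U : Matrix (Fin p) (Fin p) ℝ))
      = (U : Matrix (Fin p) (Fin p) ℝ) * (X * Y) * star (U : Matrix (Fin p) (Fin p) ℝ) := by
    intro X Y
    simp only [mul_assoc]
    rw [← mul_assoc (star (U : Matrix (Fin p) (Fin p) ℝ)) (U : Matrix (Fin p) (Fin p) ℝ),
      hsUU, one_mul]
  set g : Fin p → ℝ := fun i => Real.sqrt (1 + μ i) with hgdef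
  have hg_pos : ∀ i, 0 < g i := fun i => Real.sqrt_pos.mpr (by linarith [hμ0 i])
  have hg_sq : ∀ i, g i * g i = 1 + μ i := fun i => Real.mul_self_sqrt (by linarith [hμ0 i])
  have hone : (U : Matrix (Fin p) (Fin p) ℝ) * diagonal (fun _ : Fin p => (1:ℝ))
      * star (U : Matrix (Fin p) (Fin p) ℝ) = 1 := by
    rw [diagonal_one, mul_one, hUsU]
  have hMdiag : M = (U : Matrix (Fin p) (Fin p) ℝ) * diagonal (fun i => 1 + μ i)
      * star (U : Matrix (Fin p) (Fin p) ℝ) := by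
    have hd : (diagonal (fun i : Fin p => 1 + μ i) : Matrix (Fin p) (Fin p) ℝ)
        = diagonal (fun _ : Fin p => (1:ℝ)) + diagonal μ := by
      rw [diagonal_add]
    rw [hM, hd, mul_add, add_mul, hone, ← hspec]
  set R₀ := (U : Matrix (Fin p) (Fin p) ℝ) * diagonal g
      * star (U : Matrix (Fin p) (Fin p) ℝ) with hR0def
  have hR0pd : R₀.PosDef := posDef_conj_unitary U (posDef_diagonal_iff.mpr hg_pos)
  have hR0sq : R₀ * R₀ = M := by
    rw [hR0def, hconjmul, diagonal_mul_diagonal,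
      show (fun i => g i * g i) = fun i => 1 + μ i from funext hg_sq, ← hMdiag]
  refine ⟨hMpd, ⟨R₀, hR0pd, hR0sq⟩, ?_⟩
  intro R hR hRR
  have hReq : R = R₀ :=
    open scoped MatrixOrder in
    (CFC.sq_eq_sq_iff R R₀ (nonneg_iff_posSemidef.mpr hR.posSemidef)
      (nonneg_iff_posSemidef.mpr hR0pd.posSemidef)).mp (by rw [sq, sq, hRR, hR0sq])
  have hRinv : R⁻¹ = (U : Matrix (Fin p) (Fin p) ℝ) * diagonal (fun i => (g i)⁻¹)
      * star (U : Matrix (Fin p) (Fin p) ℝ) := by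
    apply inv_eq_right_inv
    rw [hReq, hR0def, hconjmul, diagonal_mul_diagonal,
      show (fun i => g i * (g i)⁻¹) = fun _ : Fin p => (1:ℝ) from
        funext fun i => mul_inv_cancel₀ (hg_pos i).ne', hone]
  have hS : 1 - R⁻¹ = (U : Matrix (Fin p) (Fin p) ℝ) * diagonal (fun i => 1 - (g i)⁻¹)
      * star (U : Matrix (Fin p) (Fin p) ℝ) := by
    have hd : (diagonal (fun i : Fin p => 1 - (g i)⁻¹) : Matrix (Fin p) (Fin p) ℝ)
        = diagonal (fun _ : Fin p => (1:ℝ)) - diagonal (fun i => (g i)⁻¹) := by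
      rw [diagonal_sub]
    rw [hRinv, hd, mul_sub, sub_mul, hone]
  have hsE : snorm (Eᵀ * E) = snorm E ^ 2 := by
    rw [snorm_eq_l2norm, snorm_eq_l2norm, ← hconj, sq]
    exact l2_opNorm_conjTranspose_mul_self E
  rcases Nat.eq_zero_or_pos p with hp | hp
  · subst hp
    haveI : IsEmpty (Fin 0) := inferInstance
    have h1 : snorm (1 - R⁻¹) = 0 := snorm_of_isEmpty _
    have h2 : snorm E = 0 := snorm_of_isEmpty _
    rw [h1, h2]
    norm_num
  · haveI : Nonempty (Fin p) := ⟨⟨0, hp⟩⟩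
    obtain ⟨j, -, hj⟩ := Finset.exists_mem_eq_sup' (Finset.univ_nonempty (α := Fin p)) μ
    have hjmax : ∀ i, μ i ≤ μ j := fun i => hj ▸ Finset.le_sup' μ (Finset.mem_univ i)
    have hBn : snorm (Eᵀ * E) = μ j := by
      rw [hspec, snorm_conj_unitary, snorm_diagonal,
        show (fun i => |μ i|) = μ from funext fun i => abs_of_nonneg (hμ0 i)]
      exact hj
    have hμj : μ j = snorm E ^ 2 := by rw [← hsE, hBn]
    have hgj : g j = Real.sqrt (1 + snorm E ^ 2) := by rw [hgdef]; simp [hμj]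
    have hmono : ∀ i, 1 - (g i)⁻¹ ≤ 1 - (g j)⁻¹ := by
      intro i
      have h1 : g i ≤ g j := Real.sqrt_le_sqrt (by linarith [hjmax i])
      have h2 : 1 / g j ≤ 1 / g i := one_div_le_one_div_of_le (hg_pos i) h1
      simp only [one_div] at h2
      linarith
    have hone_le : ∀ i, 1 ≤ g i := by
      intro i
      nlinarith [hg_sq i, hg_pos i, hμ0 i]
    have hnonneg : ∀ i, 0 ≤ 1 - (g i)⁻¹ := by
      intro i
      have h2 : (g i)⁻¹ ≤ 1 := inv_le_one_of_one_le₀ (hone_le i)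
      linarith
    have hnorm : snorm (1 - R⁻¹) = 1 - (g j)⁻¹ := by
      rw [hS, snorm_conj_unitary, snorm_diagonal]
      apply le_antisymm
      · exact Finset.sup'_le _ _ fun i _ => by
          rw [abs_of_nonneg (hnonneg i)]; exact hmono i
      · calc 1 - (g j)⁻¹ = |1 - (g j)⁻¹| := (abs_of_nonneg (hnonneg j)).symm
          _ ≤ _ := Finset.le_sup' (fun i => |1 - (g i)⁻¹|) (Finset.mem_univ j)
    constructor
    · rw [hnorm, hgj, one_div]
    · rw [hnorm]
      set s := snorm E ^ 2 with hs
      have hs0 : 0 ≤ s := sq_nonneg _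
      have h1s : (0:ℝ) < 1 + s := by linarith
      have hsqrt_le : Real.sqrt (1 + s) ≤ 1 + s := by
        nth_rewrite 2 [← Real.sqrt_sq h1s.le]
        exact Real.sqrt_le_sqrt (by nlinarith)
      have hsq_pos : 0 < Real.sqrt (1 + s) := Real.sqrt_pos.mpr h1s
      have h2 : (1 + s)⁻¹ ≤ (Real.sqrt (1 + s))⁻¹ := by
        have := one_div_le_one_div_of_le hsq_pos hsqrt_le
        simpa [one_div] using this
      have h3 : 1 - (g j)⁻¹ ≤ 1 - (1 + s)⁻¹ := by
        rw [hgj]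
        linarith
      have h4 : 1 - (1 + s)⁻¹ = s / (1 + s) := by field_simp; ring
      linarith
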